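/- Let M be a regular (T3) topological space and X ⊆ M any subset. Then the space M(X) is regular, where M(X) is the set M equipped with the topology generated by the open sets of M together with the singletons {x} for x ∈ X. -/

import Mathlib

open Topology

/-- The Michael-line-like topology `M(X)`: the topology generated by the open
sets of `M` together with the singletons `{x}` for `x ∈ X`. -/
def michael {M : Type*} (t : TopologicalSpace M) (X : Set M) : TopologicalSpace M :=
  TopologicalSpace.generateFrom ({U | IsOpen[t] U} ∪ {S | ∃ x ∈ X, S = {x}})

lemma michael_le {M : Type*} (t : TopologicalSpace M) (X : Set M) : michael t X ≤ t := by
  intro u hu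
  exact TopologicalSpace.GenerateOpen.basic _ (Or.inl hu)

lemma michael_singleton_open {M : Type*} (t : TopologicalSpace M) {X : Set M} {x : M}
    (hx : x ∈ X) : IsOpen[michael t X] {x} :=
  TopologicalSpace.GenerateOpen.basic _ (Or.inr ⟨x, hx, rfl⟩)

lemma michael_exists_open {M : Type*} (t : TopologicalSpace M) {X : Set M} {a : M}
    (ha : a ∉ X) {V : Set M} (hV : IsOpen[michael t X] V) (haV : a ∈ V) :
    ∃ U, IsOpen[t] U ∧ a ∈ U ∧ U ⊆ V := by
  induction hV with
  | basic s hs =>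
      rcases hs with hs | ⟨x, hxX, rfl⟩
      · exact ⟨s, hs, haV, subset_rfl⟩
      · exact absurd (haV ▸ hxX) ha
  | univ => exact ⟨Set.univ, isOpen_univ, trivial, subset_rfl⟩
  | inter s u _ _ ihs ihu =>
      obtain ⟨U1, h1, ha1, hs1⟩ := ihs haV.1
      obtain ⟨U2, h2, ha2, hs2⟩ := ihu haV.2
      exact ⟨U1 ∩ U2, h1.inter h2, ⟨ha1, ha2⟩, Set.inter_subset_inter hs1 hs2⟩
  | sUnion S _ ih =>
      obtain ⟨s, hsS, has⟩ := haV
      obtain ⟨U, hU, haU, hUs⟩ := ih s hsS has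
      exact ⟨U, hU, haU, hUs.trans (Set.subset_sUnion_of_mem hsS)⟩

lemma michael_nhds_eq {M : Type*} (t : TopologicalSpace M) {X : Set M} {a : M}
    (ha : a ∉ X) : @nhds M (michael t X) a = @nhds M t a := by
  refine le_antisymm (nhds_mono (michael_le t X)) ?_
  intro s hs
  rw [@mem_nhds_iff M (michael t X) a s] at hs
  obtain ⟨V, hVs, hV, haV⟩ := hs
  obtain ⟨U, hU, haU, hUV⟩ := michael_exists_open t ha hV haV
  exact mem_nhds_iff.mpr ⟨U, hUV.trans hVs, hU, haU⟩

/-- If `M` is regular (T3), then `M(X)` is regular (T3) for any `X ⊆ M`. -/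
theorem stmt6 {M : Type*} [t : TopologicalSpace M] [T3Space M] (X : Set M) :
    @T3Space M (michael t X) := by
  have hclosed : ∀ c : Set M, IsClosed[t] c → IsClosed[michael t X] c := fun c hc =>
    (@isOpen_compl_iff M c (michael t X)).mp (michael_le t X _ hc.isOpen_compl)
  haveI ht1 : @T1Space M (michael t X) :=
    @T1Space.mk M (michael t X) (fun x => hclosed _ isClosed_singleton)
  haveI hreg : @RegularSpace M (michael t X) := by
    refine @RegularSpace.of_exists_mem_nhds_isClosed_subset M (michael t X) (fun a s hs => ?_)
    by_cases haX : a ∈ X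
    · refine ⟨{a}, ?_, ?_, ?_⟩
      · exact @IsOpen.mem_nhds M (michael t X) a {a} (michael_singleton_open t haX) rfl
      · exact @T1Space.t1 M (michael t X) ht1 a
      · simpa using @mem_of_mem_nhds M (michael t X) a s hs
    · rw [michael_nhds_eq t haX] at hs
      obtain ⟨c, hc, hcc, hcs⟩ := exists_mem_nhds_isClosed_subset hs
      exact ⟨c, (michael_nhds_eq t haX).symm ▸ hc, hclosed _ hcc, hcs⟩
  exact @T3Space.mk M (michael t X) (@T1Space.t0Space M (michael t X) ht1) hreg
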